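/- Let m ≥ 2, let B be a real m×m matrix with Bᵀ = −B and B² = −I, and consider the symmetric control system ẋ_t = σ(x_t)a_t on ℝ^{m+1}, where σ(x) = [I_m ; (Bx_h)ᵀ] and the controls a are measurable functions with values in the closed unit ball of ℝᵐ. Let T(x₀) be the minimum time to reach the origin. Then for every x₀ = (x_{0,h},x_{0,v}) with x_{0,h} ≠ 0, T(x₀) is finite and T(x₀) ≤ U(x₀)²/|x_{0,h}|, where U(x) = (|x_h|⁴ + 4x_v²)^{1/4}. -/

import Mathlib

open Set MeasureTheory
open scoped RealInnerProductSpace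

/-- An admissible trajectory of the Hörmander-type symmetric control system
`ẋ = σ(x)a = (a, ⟪Bx_h, a⟫)`, with controls in the closed unit ball of `ℝᵐ`. -/
def IsHormTraj {m : ℕ} (B : EuclideanSpace ℝ (Fin m) →L[ℝ] EuclideanSpace ℝ (Fin m))
    (x₀ : EuclideanSpace ℝ (Fin m) × ℝ) (x : ℝ → EuclideanSpace ℝ (Fin m) × ℝ) : Prop :=
  x 0 = x₀ ∧ ContinuousOn x (Ici (0:ℝ)) ∧
    ∃ a : ℝ → EuclideanSpace ℝ (Fin m), Measurable a ∧ (∀ t, ‖a t‖ ≤ 1) ∧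
      ∀ t : ℝ, 0 ≤ t →
        x t = x₀ + ∫ s in (0:ℝ)..t,
          ((a s, ⟪B (x s).1, a s⟫) : EuclideanSpace ℝ (Fin m) × ℝ)

/-- The set of times at which the origin is reached from `x₀`. -/
def hormReachTimes {m : ℕ}
    (B : EuclideanSpace ℝ (Fin m) →L[ℝ] EuclideanSpace ℝ (Fin m))
    (x₀ : EuclideanSpace ℝ (Fin m) × ℝ) : Set ℝ :=
  {t | 0 ≤ t ∧ ∃ x : ℝ → EuclideanSpace ℝ (Fin m) × ℝ, IsHormTraj B x₀ x ∧ x t = 0}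

/-- for the Hörmander-type system, the minimum time `T(x₀)` to reach
the origin is finite whenever `x_{0,h} ≠ 0` and satisfies
`T(x₀) ≤ U(x₀)²/|x_{0,h}|`, where `U` is the gauge function. -/
lemma horm_key {m : ℕ} (B : EuclideanSpace ℝ (Fin m) →L[ℝ] EuclideanSpace ℝ (Fin m))
    (hskew : ∀ v w : EuclideanSpace ℝ (Fin m), ⟪B v, w⟫ = -⟪v, B w⟫)
    (hB2 : ∀ v, B (B v) = -v)
    (x₀ : EuclideanSpace ℝ (Fin m) × ℝ) (hx : x₀.1 ≠ 0)
    (p q v p' q' v' : ℝ → ℝ)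
    (hp : ∀ t, HasDerivAt p (p' t) t) (hq : ∀ t, HasDerivAt q (q' t) t)
    (hv : ∀ t, HasDerivAt v (v' t) t)
    (hp' : Continuous p') (hq' : Continuous q') (hv' : Continuous v')
    (hbd : ∀ t, (p' t)^2 + (q' t)^2 ≤ 1)
    (hveq : ∀ t, v' t = p t * q' t - q t * p' t)
    (hp0 : p 0 = ‖x₀.1‖) (hq0 : q 0 = 0) (hv0 : v 0 = x₀.2)
    (T : ℝ) (hT : 0 ≤ T) (hpT : p T = 0) (hqT : q T = 0) (hvT : v T = 0) :
    T ∈ hormReachTimes B x₀ := by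
  classical
  have hr : (0:ℝ) < ‖x₀.1‖ := norm_pos_iff.mpr hx
  obtain ⟨u, hudef⟩ : ∃ u : EuclideanSpace ℝ (Fin m), u = ‖x₀.1‖⁻¹ • x₀.1 := ⟨_, rfl⟩
  obtain ⟨w, hwdef⟩ : ∃ w : EuclideanSpace ℝ (Fin m), w = B u := ⟨_, rfl⟩
  have hunorm : ‖u‖ = 1 := by
    rw [hudef, norm_smul, norm_inv, Real.norm_eq_abs, abs_of_pos hr,
      inv_mul_cancel₀ (ne_of_gt hr)]
  have huu : ⟪u, u⟫ = 1 := by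
    rw [real_inner_self_eq_norm_sq, hunorm]; norm_num
  have huw : ⟪u, w⟫ = 0 := by
    have h1 : ⟪B u, u⟫ = -⟪u, B u⟫ := hskew u u
    have h2 : ⟪u, B u⟫ = ⟪B u, u⟫ := real_inner_comm _ _
    rw [hwdef]; linarith
  have hwu : ⟪w, u⟫ = 0 := by rw [real_inner_comm]; exact huw
  have hww : ⟪w, w⟫ = 1 := by
    have : ⟪B u, B u⟫ = -⟪u, B (B u)⟫ := hskew u (B u)
    rw [hwdef, this, hB2, inner_neg_right, neg_neg, huu]
  -- curves
  set y : ℝ → EuclideanSpace ℝ (Fin m) × ℝ := fun t => (p t • u + q t • w, v t) with hydef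
  set g : ℝ → EuclideanSpace ℝ (Fin m) := fun t => p' t • u + q' t • w with hgdef
  have hy0 : y 0 = x₀ := by
    rw [hydef]
    simp only [hp0, hq0, hv0, zero_smul, add_zero]
    rw [hudef, smul_smul, mul_inv_cancel₀ (ne_of_gt hr), one_smul]
  have hyT : y T = 0 := by
    rw [hydef]; simp [hpT, hqT, hvT]
  have hyder : ∀ t, HasDerivAt y (g t, v' t) t := fun t =>
    (((hp t).smul_const u).add ((hq t).smul_const w)).prodMk (hv t)
  have hgc : Continuous g := (hp'.smul continuous_const).add (hq'.smul continuous_const)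
  have hyc : Continuous y := by
    rw [continuous_iff_continuousAt]; exact fun t => (hyder t).continuousAt
  have hinner : ∀ t, ⟪B (y t).1, g t⟫ = v' t := by
    intro t
    have hBu : B u = w := hwdef.symm
    have hBw : B w = -u := by rw [hwdef, hB2]
    have hB : B (p t • u + q t • w) = p t • w - q t • u := by
      rw [map_add, B.map_smul, B.map_smul, hBu, hBw, smul_neg, sub_eq_add_neg]
    show ⟪B (p t • u + q t • w), g t⟫ = v' t
    rw [hB, hgdef]
    simp only [inner_sub_left, inner_add_right, inner_smul_left, inner_smul_right,
      RCLike.inner_apply, conj_trivial]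
    rw [huu, huw, hwu, hww, hveq]
    ring
  set x : ℝ → EuclideanSpace ℝ (Fin m) × ℝ := fun t => if t ≤ T then y t else 0 with hxdef
  set a : ℝ → EuclideanSpace ℝ (Fin m) := fun t => if t ≤ T then g t else 0 with hadef
  set G : ℝ → EuclideanSpace ℝ (Fin m) × ℝ := fun s => (g s, v' s) with hGdef
  set F : ℝ → EuclideanSpace ℝ (Fin m) × ℝ := fun s => ((a s, ⟪B (x s).1, a s⟫) : EuclideanSpace ℝ (Fin m) × ℝ) with hFdef
  have hFG : ∀ s, s ≤ T → F s = G s := by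
    intro s hs
    rw [hFdef, hGdef]
    simp only [hadef, hxdef, if_pos hs]
    exact Prod.ext rfl (hinner s)
  have hF0 : ∀ s, T < s → F s = 0 := by
    intro s hs
    rw [hFdef]
    simp only [hadef, if_neg (not_le.mpr hs)]
    simp
  have hGc : Continuous G := hgc.prodMk hv'
  have hGint : ∀ c d : ℝ, IntervalIntegrable G volume c d := fun c d =>
    hGc.intervalIntegrable c d
  have hftc : ∀ t : ℝ, (∫ s in (0:ℝ)..t, G s) = y t - y 0 := by
    intro t
    exact intervalIntegral.integral_eq_sub_of_hasDerivAt
      (fun s _ => hyder s) (hGint 0 t)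
  have hFint : ∀ c d : ℝ, IntervalIntegrable F volume c d := by
    intro c d
    have hFind : F = (Set.Iic T).indicator G := by
      funext s
      by_cases hs : s ≤ T
      · rw [hFG s hs, Set.indicator_of_mem (by exact hs)]
      · rw [hF0 s (not_le.mp hs), Set.indicator_of_notMem (by exact hs)]
    rw [hFind, intervalIntegrable_iff] at *
    exact ((hGc.integrableOn_uIoc).indicator measurableSet_Iic)
  have hxmem : IsHormTraj B x₀ x := by
    refine ⟨by rw [hxdef]; simp only [if_pos hT]; exact hy0, ?_, a, ?_, ?_, ?_⟩
    · apply Continuous.continuousOn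
      refine Continuous.if_le hyc continuous_const continuous_id continuous_const ?_
      intro s hs; rw [hs]; exact hyT
    · apply Measurable.ite measurableSet_Iic hgc.measurable measurable_const
    · intro t
      rw [hadef]
      by_cases ht : t ≤ T
      · simp only [if_pos ht]
        have h1 : ‖g t‖^2 ≤ 1 := by
          have : ‖g t‖^2 = (p' t)^2 + (q' t)^2 := by
            rw [← real_inner_self_eq_norm_sq, hgdef]
            simp only [inner_add_left, inner_add_right, inner_smul_left, inner_smul_right,
              RCLike.inner_apply, conj_trivial]
            rw [huu, huw, hwu, hww]; ring
          rw [this]; exact hbd t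
        nlinarith [norm_nonneg (g t)]
      · simp only [if_neg ht, norm_zero]; norm_num
    · intro t ht
      show x t = x₀ + ∫ s in (0:ℝ)..t, F s
      by_cases htT : t ≤ T
      · have : (∫ s in (0:ℝ)..t, F s) = ∫ s in (0:ℝ)..t, G s := by
          apply intervalIntegral.integral_congr
          intro s hs
          rw [Set.uIcc_of_le ht] at hs
          exact hFG s (le_trans hs.2 htT)
        rw [this, hftc, hy0, hxdef]
        simp only [if_pos htT]
        abel
      · push_neg at htT
        have hsplit : (∫ s in (0:ℝ)..t, F s)
            = (∫ s in (0:ℝ)..T, F s) + ∫ s in T..t, F s :=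
          (intervalIntegral.integral_add_adjacent_intervals (hFint 0 T) (hFint T t)).symm
        have h1 : (∫ s in (0:ℝ)..T, F s) = ∫ s in (0:ℝ)..T, G s := by
          apply intervalIntegral.integral_congr
          intro s hs
          rw [Set.uIcc_of_le hT] at hs
          exact hFG s hs.2
        have h2 : (∫ s in T..t, F s) = 0 := by
          rw [intervalIntegral.integral_of_le htT.le]
          rw [MeasureTheory.setIntegral_congr_fun measurableSet_Ioc
            (fun s hs => hF0 s hs.1)]
          simp
        rw [hsplit, h1, h2, hftc, hy0, hyT, hxdef]
        simp only [if_neg (not_le.mpr htT)]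
        abel
  exact ⟨hT, x, hxmem, by rw [hxdef]; simp only [if_pos le_rfl]; exact hyT⟩


lemma arc_exists (r wv : ℝ) (hr : 0 < r) (hw : 0 < wv) :
    ∃ α : ℝ, 0 < α ∧ α < Real.pi ∧
      r^2*(2*α - Real.sin (2*α)) = 4*wv*(Real.sin α)^2 := by
  set A : ℝ := min (1/2) (wv / r^2) with hAdef
  have hA0 : 0 < A := lt_min (by norm_num) (by positivity)
  have hA1 : A ≤ 1/2 := min_le_left _ _
  have hrA : r^2 * A ≤ wv := by
    rw [← le_div_iff₀' (by positivity)]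
    exact min_le_right _ _
  have h2a := Real.sin_gt_sub_cube (by linarith : (0:ℝ) < 2*A)
  have hsa := Real.sin_gt_sub_cube hA0
  have e1 : 2*A - Real.sin (2*A) < 2*A^3 := by nlinarith [h2a, pow_pos hA0 3]
  have hs34 : (3/4)*A < Real.sin A := by
    nlinarith [hsa, mul_nonneg (by linarith : (0:ℝ) ≤ 1/2 - A) (by linarith : (0:ℝ) ≤ 1/2 + A), hA0]
  have e2 : (9/16)*A^2 < (Real.sin A)^2 := by nlinarith [hs34, hA0]
  set φ : ℝ → ℝ := fun α => r^2*(2*α - Real.sin (2*α)) - 4*wv*(Real.sin α)^2 with hφdef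
  have hφA : φ A < 0 := by
    have f1 : r^2*(2*A - Real.sin (2*A)) ≤ 2*r^2*A^3 := by nlinarith [e1, sq_nonneg r]
    have f2 : 4*wv*((9/16)*A^2) < 4*wv*(Real.sin A)^2 := by nlinarith [e2, hw]
    have f3 : 2*r^2*A^3 ≤ 2*wv*A^2 := by nlinarith [hrA, sq_nonneg A, hA0]
    have : φ A = r^2*(2*A - Real.sin (2*A)) - 4*wv*(Real.sin A)^2 := rfl
    nlinarith [f1, f2, f3, mul_pos hw (mul_pos hA0 hA0)]
  have hφπ : 0 < φ Real.pi := by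
    have : φ Real.pi = r^2*(2*Real.pi - Real.sin (2*Real.pi)) - 4*wv*(Real.sin Real.pi)^2 := rfl
    rw [this, Real.sin_two_pi, Real.sin_pi]
    have := Real.pi_pos
    nlinarith [sq_nonneg r, mul_pos (mul_pos hr hr) Real.pi_pos]
  have hAπ : A ≤ Real.pi := by linarith [Real.pi_gt_three]
  have hφc : ContinuousOn φ (Icc A Real.pi) := by
    apply Continuous.continuousOn
    fun_prop
  have h0 : (0:ℝ) ∈ Ioo (φ A) (φ Real.pi) := ⟨hφA, hφπ⟩
  obtain ⟨α, hα, hφα⟩ := intermediate_value_Ioo hAπ hφc h0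
  exact ⟨α, lt_trans hA0 hα.1, hα.2, by
    have : r^2*(2*α - Real.sin (2*α)) - 4*wv*(Real.sin α)^2 = 0 := hφα
    linarith⟩

lemma arc_time_bound (r wv α : ℝ) (hr : 0 < r) (hα : 0 < α) (hαπ : α < Real.pi)
    (harea : r^2*(2*α - Real.sin (2*α)) = 4*wv*(Real.sin α)^2) :
    (2*(r/(2*Real.sin α))*α) * r ≤ Real.sqrt (r^4 + 4*wv^2) := by
  set s := Real.sin α with hsdef
  set c := Real.cos α with hcdef
  have hs : 0 < s := Real.sin_pos_of_pos_of_lt_pi hα hαπ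
  have hsc : s^2 + c^2 = 1 := Real.sin_sq_add_cos_sq α
  have h' : 4*wv*s^2 = r^2*(2*α - 2*s*c) := by
    rw [Real.sin_two_mul] at harea; linarith
  have hA2' : 16*s^4*wv^2 = r^4*(2*α-2*s*c)^2 := by
    linear_combination (4*wv*s^2 + r^2*(2*α - 2*s*c)) * h'
  have key4 : 4*α^2*s^2 ≤ 4*s^4 + (2*α - 2*s*c)^2 := by
    nlinarith [sq_nonneg (s - α*c), hsc]
  have hmain : r^4*α^2 ≤ (r^4 + 4*wv^2) * s^2 := by
    have h1 : 4*s^2*(r^4*α^2) ≤ 4*s^2*((r^4+4*wv^2)*s^2) := by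
      nlinarith [mul_le_mul_of_nonneg_left key4 (show (0:ℝ) ≤ r^4 by positivity), hA2']
    exact le_of_mul_le_mul_left (by linarith [h1]) (by positivity : (0:ℝ) < 4*s^2)
  have hTr : (0:ℝ) ≤ (2*(r/(2*s))*α) * r := by positivity
  rw [Real.le_sqrt hTr (by positivity)]
  have heq : ((2*(r/(2*s))*α) * r)^2 = r^4*α^2/s^2 := by
    field_simp
  rw [heq, div_le_iff₀ (by positivity : (0:ℝ) < s^2)]
  exact hmain

theorem stmt_12 {m : ℕ} (hm : 2 ≤ m)
    (B : EuclideanSpace ℝ (Fin m) →L[ℝ] EuclideanSpace ℝ (Fin m))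
    (hskew : ∀ v w : EuclideanSpace ℝ (Fin m), ⟪B v, w⟫ = -⟪v, B w⟫)
    (hB2 : ∀ v, B (B v) = -v)
    (U : EuclideanSpace ℝ (Fin m) × ℝ → ℝ)
    (hU : ∀ x : EuclideanSpace ℝ (Fin m) × ℝ,
      U x = (‖x.1‖ ^ 4 + 4 * x.2 ^ 2) ^ ((1:ℝ)/4)) :
    ∀ x₀ : EuclideanSpace ℝ (Fin m) × ℝ, x₀.1 ≠ 0 →
      (hormReachTimes B x₀).Nonempty ∧
      sInf (hormReachTimes B x₀) ≤ (U x₀) ^ 2 / ‖x₀.1‖ := by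
  intro x₀ hx
  have hr : (0:ℝ) < ‖x₀.1‖ := norm_pos_iff.mpr hx
  have hX : (0:ℝ) ≤ ‖x₀.1‖ ^ 4 + 4 * x₀.2 ^ 2 := by positivity
  have hU2 : (U x₀)^2 = Real.sqrt (‖x₀.1‖ ^ 4 + 4 * x₀.2 ^ 2) := by
    rw [hU x₀, ← Real.rpow_natCast ((‖x₀.1‖ ^ 4 + 4 * x₀.2 ^ 2) ^ ((1:ℝ)/4)) 2,
      ← Real.rpow_mul hX, Real.sqrt_eq_rpow]
    norm_num
  have hbdd : BddBelow (hormReachTimes B x₀) := ⟨0, fun t ht => ht.1⟩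
  suffices h : ∃ T ∈ hormReachTimes B x₀,
      T ≤ Real.sqrt (‖x₀.1‖ ^ 4 + 4 * x₀.2 ^ 2) / ‖x₀.1‖ by
    obtain ⟨T, hT, hTle⟩ := h
    exact ⟨⟨T, hT⟩, by rw [hU2]; exact le_trans (csInf_le hbdd hT) hTle⟩
  by_cases hv0 : x₀.2 = 0
  · -- straight line
    refine ⟨‖x₀.1‖, ?_, ?_⟩
    · apply horm_key B hskew hB2 x₀ hx
        (fun t => ‖x₀.1‖ - t) (fun _ => 0) (fun _ => 0)
        (fun _ => -1) (fun _ => 0) (fun _ => 0)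
        (fun t => (hasDerivAt_id t).const_sub ‖x₀.1‖)
        (fun t => hasDerivAt_const t 0) (fun t => hasDerivAt_const t 0)
        continuous_const continuous_const continuous_const
        (by intro t; norm_num) (by intro t; ring) (by ring) rfl hv0.symm
        ‖x₀.1‖ hr.le (by ring) rfl (by simp [hv0])
    · rw [hv0]
      have : ‖x₀.1‖ ^ 4 + 4 * (0:ℝ)^2 = (‖x₀.1‖^2)^2 := by ring
      rw [this, Real.sqrt_sq (by positivity)]
      rw [le_div_iff₀ hr]
      nlinarith [hr]
  · -- circular arc
    have hw : 0 < |x₀.2| := abs_pos.mpr hv0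
    obtain ⟨α, hα0, hαπ, harea⟩ := arc_exists ‖x₀.1‖ |x₀.2| hr hw
    set r : ℝ := ‖x₀.1‖ with hrdef
    set s : ℝ := Real.sin α with hsdef
    set c : ℝ := Real.cos α with hcdef
    have hs : 0 < s := Real.sin_pos_of_pos_of_lt_pi hα0 hαπ
    set R : ℝ := r/(2*s) with hRdef
    have hR : 0 < R := by positivity
    set ε : ℝ := if 0 ≤ x₀.2 then 1 else -1 with hεdef
    have hε2 : ε^2 = 1 := by rw [hεdef]; split_ifs <;> norm_num
    have hεv : ε * |x₀.2| = x₀.2 := by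
      rw [hεdef]; split_ifs with h
      · rw [abs_of_nonneg h]; ring
      · rw [abs_of_neg (lt_of_not_ge h)]; ring
    set T : ℝ := 2*R*α with hTdef
    have hT0 : 0 ≤ T := by positivity
    have hβT : α - T/R = -α := by
      rw [hTdef]; field_simp; ring
    have hβ0 : α - 0/R = α := by norm_num
    have hβ : ∀ t : ℝ, HasDerivAt (fun t : ℝ => α - t/R) (-(1/R)) t := fun t =>
      ((hasDerivAt_id t).div_const R).const_sub α
    have hsin : ∀ t : ℝ, HasDerivAt (fun t : ℝ => Real.sin (α - t/R))
        (Real.cos (α - t/R) * -(1/R)) t := fun t =>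
      (Real.hasDerivAt_sin _).comp t (hβ t)
    have hcos : ∀ t : ℝ, HasDerivAt (fun t : ℝ => Real.cos (α - t/R))
        (-Real.sin (α - t/R) * -(1/R)) t := fun t =>
      (Real.hasDerivAt_cos _).comp t (hβ t)
    -- the three coordinate functions
    set p : ℝ → ℝ := fun t => r/2 + R * Real.sin (α - t/R) with hpdef
    set q : ℝ → ℝ := fun t => ε * R * (c - Real.cos (α - t/R)) with hqdef
    set v : ℝ → ℝ := fun t => x₀.2 - ε * (r*R/2 * (Real.cos (α - t/R) - c)
      + c*R^2*(Real.sin (α - t/R) - s) + R*t) with hvdef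
    set p' : ℝ → ℝ := fun t => -Real.cos (α - t/R) with hp'def
    set q' : ℝ → ℝ := fun t => -ε * Real.sin (α - t/R) with hq'def
    set v' : ℝ → ℝ := fun t => -ε * (r/2 * Real.sin (α - t/R)
      - c*R*Real.cos (α - t/R) + R) with hv'def
    have hp : ∀ t, HasDerivAt p (p' t) t := by
      intro t
      have h := ((hsin t).const_mul R).const_add (r/2)
      have e : p' t = R * (Real.cos (α - t/R) * -(1/R)) := by
        rw [hp'def]; field_simp
      rw [e]; exact h
    have hq : ∀ t, HasDerivAt q (q' t) t := by
      intro t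
      have h := (((hcos t).const_sub c).const_mul (ε*R))
      have e : q' t = ε * R * -(-Real.sin (α - t/R) * -(1/R)) := by
        rw [hq'def]; field_simp
      rw [e]; exact h
    have hv : ∀ t, HasDerivAt v (v' t) t := by
      intro t
      have h1 := ((hcos t).sub_const c).const_mul (r*R/2)
      have h2 := ((hsin t).sub_const s).const_mul (c*R^2)
      have h3 := (hasDerivAt_id t).const_mul R
      have h := (((h1.add h2).add h3).const_mul ε).const_sub x₀.2
      have e : v' t = -(ε * ((r*R/2 * (-Real.sin (α - t/R) * -(1/R))
          + c*R^2 * (Real.cos (α - t/R) * -(1/R))) + R*1)) := by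
        rw [hv'def]; field_simp; ring
      rw [e]
      exact h
    have hp'c : Continuous p' := by rw [hp'def]; fun_prop
    have hq'c : Continuous q' := by rw [hq'def]; fun_prop
    have hv'c : Continuous v' := by rw [hv'def]; fun_prop
    have hbd : ∀ t, (p' t)^2 + (q' t)^2 ≤ 1 := by
      intro t
      rw [hp'def, hq'def]
      have := Real.sin_sq_add_cos_sq (α - t/R)
      nlinarith [this, hε2]
    have hveq : ∀ t, v' t = p t * q' t - q t * p' t := by
      intro t
      rw [hp'def, hq'def, hv'def, hpdef, hqdef]
      simp only
      linear_combination (ε*R) * Real.sin_sq_add_cos_sq (α - t/R)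
    have hp0 : p 0 = r := by
      rw [hpdef]; simp only [hβ0, ← hsdef]
      rw [hRdef]; field_simp; ring
    have hq0 : q 0 = 0 := by
      rw [hqdef]; simp only [hβ0, ← hcdef]; ring
    have hv0' : v 0 = x₀.2 := by
      rw [hvdef]; simp only [hβ0, ← hcdef, ← hsdef]; ring
    have hpT : p T = 0 := by
      rw [hpdef]; simp only [hβT, Real.sin_neg, ← hsdef]
      rw [hRdef]; field_simp; ring
    have hqT : q T = 0 := by
      rw [hqdef]; simp only [hβT, Real.cos_neg, ← hcdef]; ring
    have hR2 : R^2*(2*α - 2*s*c) = |x₀.2| := by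
      rw [Real.sin_two_mul] at harea
      rw [hRdef, div_pow, div_mul_eq_mul_div, div_eq_iff (by positivity : ((2:ℝ)*s)^2 ≠ 0)]
      linear_combination harea
    have hvT : v T = 0 := by
      rw [hvdef]; simp only [hβT, Real.cos_neg, Real.sin_neg, ← hcdef, ← hsdef]
      rw [hTdef]
      linear_combination -(ε * hR2) - hεv
    have hmem : T ∈ hormReachTimes B x₀ :=
      horm_key B hskew hB2 x₀ hx p q v p' q' v' hp hq hv hp'c hq'c hv'c
        hbd hveq hp0 hq0 hv0' T hT0 hpT hqT hvT
    refine ⟨T, hmem, ?_⟩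
    rw [le_div_iff₀ hr]
    have hb := arc_time_bound r |x₀.2| α hr hα0 hαπ harea
    rw [show (4:ℝ) * x₀.2^2 = 4 * |x₀.2|^2 by rw [sq_abs]]
    exact hb
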